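/- arXiv:1007.4031 — 3 statements merged into one kernel-verified Lean document; each statement's English description precedes it below -/
import Mathlib

section
/- Among all trees on N ≥ 3 vertices, the star K_{1,N-1} is the unique tree with minimum average distance, and this minimum equals 2 - 2/N. -/
open SimpleGraph Finset

/-- Degree of a vertex (noncomputable, no decidability assumptions). -/
noncomputable def deg {V : Type*} [Fintype V] (G : SimpleGraph V) (u : V) : ℕ :=
  (G.neighborSet u).ncard

/-- Number of edges among the neighbors of `u` (as a rational, each edge counted once). -/
noncomputable def triC {V : Type*} [Fintype V] (G : SimpleGraph V) (u : V) : ℚ :=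
  ({p : V × V | G.Adj u p.1 ∧ G.Adj u p.2 ∧ G.Adj p.1 p.2}.ncard : ℚ) / 2

/-- Local clustering coefficient, with the convention that vertices of degree ≤ 1 have
clustering coefficient 1. -/
noncomputable def clust {V : Type*} [Fintype V] (G : SimpleGraph V) (u : V) : ℚ :=
  if deg G u ≤ 1 then 1 else triC G u / ((deg G u).choose 2)

/-- Sum of local clustering coefficients over all vertices. -/
noncomputable def totalClust {V : Type*} [Fintype V] (G : SimpleGraph V) : ℚ :=
  ∑ u, clust G u

/-- Number of edges of a graph. -/
noncomputable def edgeCount {V : Type*} [Fintype V] (G : SimpleGraph V) : ℕ :=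
  G.edgeSet.ncard

/-- Average distance of a (connected) graph: sum of pairwise shortest-path distances over
all unordered pairs of distinct vertices, divided by `N choose 2`.  (Ordered pairs are summed,
diagonal terms vanish, hence the factor 2.) -/
noncomputable def avgDist {V : Type*} [Fintype V] (G : SimpleGraph V) : ℚ :=
  (∑ u : V, ∑ v : V, (G.dist u v : ℚ)) / (2 * (Fintype.card V).choose 2)

/-- The star graph with center `c`: the center is adjacent to every other vertex and
there are no other edges. -/
def starGraph {V : Type*} (c : V) : SimpleGraph V where
  Adj u v := u ≠ v ∧ (u = c ∨ v = c)
  symm := ⟨fun u v h => ⟨h.1.symm, h.2.symm⟩⟩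
  loopless := ⟨fun u h => h.1 rfl⟩


lemma star_dist_le_two {V : Type*} [Fintype V] {G : SimpleGraph V} {c : V}
    (hG : G = _root_.starGraph c) : ∀ u v : V, G.dist u v ≤ 2 := by
  subst hG
  intro u v
  by_cases huv : u = v
  · simp [huv, SimpleGraph.dist_self]
  by_cases hu : u = c
  · have : (_root_.starGraph c).Adj u v := ⟨huv, Or.inl hu⟩
    calc (_root_.starGraph c).dist u v ≤ _ := dist_le (Walk.cons this Walk.nil)
    _ ≤ 2 := by simp
  by_cases hv : v = c
  · have : (_root_.starGraph c).Adj u v := ⟨huv, Or.inr hv⟩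
    calc (_root_.starGraph c).dist u v ≤ _ := dist_le (Walk.cons this Walk.nil)
    _ ≤ 2 := by simp
  · have h1 : (_root_.starGraph c).Adj u c := ⟨hu, Or.inr rfl⟩
    have h2 : (_root_.starGraph c).Adj c v := ⟨fun h => hv h.symm, Or.inl rfl⟩
    calc (_root_.starGraph c).dist u v ≤ _ := dist_le (Walk.cons h1 (Walk.cons h2 Walk.nil))
    _ ≤ 2 := by simp

lemma tree_star_of_dist_le_two {V : Type*} [Fintype V] {G : SimpleGraph V}
    (hT : G.IsTree) (h3 : 3 ≤ Fintype.card V) (hd : ∀ u v : V, G.dist u v ≤ 2) :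
    ∃ c : V, G = _root_.starGraph c := by
  classical
  have hconn := hT.isConnected
  haveI : DecidableEq V := Classical.decEq V
  haveI : DecidableRel G.Adj := Classical.decRel _
  have hdegsum : ∑ u, G.degree u = 2 * (Fintype.card V - 1) := by
    have hE : #G.edgeFinset + 1 = Fintype.card V := hT.card_edgeFinset
    rw [G.sum_degrees_eq_twice_card_edges]
    omega
  have hex : ∃ c, 2 ≤ G.degree c := by
    by_contra h
    push_neg at h
    have hle : ∑ u, G.degree u ≤ ∑ _u : V, 1 :=
      Finset.sum_le_sum fun u _ => Nat.lt_succ_iff.mp (h u)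
    simp only [Finset.sum_const, smul_eq_mul, mul_one, Finset.card_univ] at hle
    omega
  obtain ⟨c, hc2⟩ := hex
  have hcard : 1 < (G.neighborFinset c).card := hc2
  obtain ⟨a, ha, b, hb, hab⟩ := Finset.one_lt_card.mp hcard
  rw [mem_neighborFinset] at ha hb
  have hadj : ∀ v : V, v ≠ c → G.Adj c v := by
    intro v hv
    by_contra hnadj
    have hdcv : G.dist c v = 2 := by
      have h1 : G.dist c v ≠ 0 :=
        dist_ne_zero_iff_ne_and_reachable.mpr ⟨Ne.symm hv, hconn.preconnected c v⟩
      have h2 : G.dist c v ≠ 1 := fun h => hnadj (dist_eq_one_iff_adj.mp h)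
      have := hd c v
      omega
    obtain ⟨p, hp⟩ := hconn.exists_walk_length_eq_dist c v
    rw [hdcv] at hp
    set w := p.getVert 1 with hw
    have h01 : G.Adj c w := by
      have := p.adj_getVert_succ (i := 0) (by omega)
      rwa [p.getVert_zero] at this
    have h12 : G.Adj w v := by
      have := p.adj_getVert_succ (i := 1) (by omega)
      rwa [show (1 : ℕ) + 1 = p.length by omega, p.getVert_length] at this
    obtain ⟨x, hx, hxw⟩ : ∃ x, G.Adj c x ∧ x ≠ w := by
      by_cases hwa : w = a
      · exact ⟨b, hb, fun h => hab (h ▸ hwa ▸ rfl)⟩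
      · exact ⟨a, ha, fun h => hwa (h ▸ rfl)⟩
    have hvx : v ≠ x := fun h => hnadj ((h ▸ hx : G.Adj c v))
    have hq3 : (Walk.cons h12.symm (Walk.cons h01.symm (Walk.cons hx Walk.nil)) :
        G.Walk v x).IsPath := by
      simp [Walk.isPath_def, List.nodup_cons]
      refine ⟨⟨h12.ne', hv, hvx⟩, ⟨h01.ne', Ne.symm hxw⟩, hx.ne⟩
    have hdvx : G.dist v x ≤ 2 := hd v x
    have hne0 : G.dist v x ≠ 0 :=
      dist_ne_zero_iff_ne_and_reachable.mpr ⟨hvx, hconn.preconnected v x⟩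
    obtain ⟨q, hq⟩ := hconn.exists_walk_length_eq_dist v x
    have hbp : q.bypass.length ≤ 2 := le_trans (Walk.length_bypass_le q) (by omega)
    have := hT.IsAcyclic.path_unique
      ⟨Walk.cons h12.symm (Walk.cons h01.symm (Walk.cons hx Walk.nil)), hq3⟩
      ⟨q.bypass, q.bypass_isPath⟩
    have hlen := congrArg (fun r : G.Path v x => (r : G.Walk v x).length) this
    simp only [Walk.length_cons, Walk.length_nil] at hlen
    omega
  refine ⟨c, ?_⟩
  ext u v
  show G.Adj u v ↔ u ≠ v ∧ (u = c ∨ v = c)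
  constructor
  · intro huv
    refine ⟨huv.ne, ?_⟩
    by_contra h
    push_neg at h
    obtain ⟨hu, hv⟩ := h
    have hcu := hadj u hu
    have hcv := hadj v hv
    have hp1 : (Walk.cons huv Walk.nil : G.Walk u v).IsPath := by
      simp [Walk.isPath_def, huv.ne]
    have hp2 : (Walk.cons hcu.symm (Walk.cons hcv Walk.nil) : G.Walk u v).IsPath := by
      simp [Walk.isPath_def, List.nodup_cons]
      exact ⟨⟨hu, huv.ne⟩, fun h => hv h.symm⟩
    have := hT.IsAcyclic.path_unique ⟨Walk.cons huv Walk.nil, hp1⟩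
      ⟨Walk.cons hcu.symm (Walk.cons hcv Walk.nil), hp2⟩
    have hlen := congrArg (fun r : G.Path u v => (r : G.Walk u v).length) this
    simp at hlen
  · rintro ⟨hne, rfl | rfl⟩
    · exact hadj v (fun h => hne h.symm)
    · exact (hadj u hne).symm

/-- Among all trees on `N ≥ 3` vertices, the star is the unique tree with minimum average
distance, and this minimum equals `2 - 2/N`. -/
theorem stmt2 {V : Type*} [Fintype V] (h3 : 3 ≤ Fintype.card V)
    (G : SimpleGraph V) (hT : G.IsTree) :
    2 - 2 / (Fintype.card V : ℚ) ≤ avgDist G ∧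
    (avgDist G = 2 - 2 / (Fintype.card V : ℚ) ↔ ∃ c : V, G = _root_.starGraph c) := by
  have hstar : (∀ u v : V, G.dist u v ≤ 2) ↔ ∃ c : V, G = _root_.starGraph c :=
    ⟨tree_star_of_dist_le_two hT h3, fun ⟨_, hc⟩ => star_dist_le_two hc⟩
  classical
  haveI : DecidableEq V := Classical.decEq V
  haveI : DecidableRel G.Adj := Classical.decRel _
  have hconn := hT.isConnected
  set n := Fintype.card V with hn
  have hn1 : (1 : ℕ) ≤ n := by omega
  have hedge : #G.edgeFinset = n - 1 := by have := hT.card_edgeFinset; omega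
  set S := ∑ u : V, ∑ v : V, (G.dist u v : ℚ) with hS
  -- sum of adjacency indicators
  have hA : ∑ u : V, ∑ v : V, (if G.Adj u v then (1:ℚ) else 0) = 2 * ((n : ℚ) - 1) := by
    have h1 : ∀ u : V, ∑ v : V, (if G.Adj u v then (1:ℚ) else 0) = (G.degree u : ℚ) := by
      intro u
      rw [Finset.sum_boole]
      norm_cast
      rw [← neighborFinset_eq_filter]
      rfl
    rw [Finset.sum_congr rfl fun u _ => h1 u]
    rw [← Nat.cast_sum]
    rw [G.sum_degrees_eq_twice_card_edges, hedge]
    push_cast [Nat.cast_sub hn1]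
    ring
  -- sum of ne indicators
  have hB : ∑ u : V, ∑ v : V, (if u = v then (0:ℚ) else 1) = (n : ℚ) * ((n : ℚ) - 1) := by
    have h1 : ∀ u : V, ∑ v : V, (if u = v then (0:ℚ) else 1) = (n : ℚ) - 1 := by
      intro u
      have : ∀ v : V, (if u = v then (0:ℚ) else 1) = 1 - (if u = v then (1:ℚ) else 0) := by
        intro v; by_cases h : u = v <;> simp [h]
      rw [Finset.sum_congr rfl fun v _ => this v, Finset.sum_sub_distrib,
        Finset.sum_ite_eq univ u (fun _ => (1:ℚ))]
      simp [hn]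
    rw [Finset.sum_congr rfl fun u _ => h1 u]
    simp [hn, mul_comm]
    ring
  -- pointwise facts
  have hge2 : ∀ u v : V, u ≠ v → ¬ G.Adj u v → 2 ≤ G.dist u v := by
    intro u v huv hadj
    have h1 : G.dist u v ≠ 0 :=
      dist_ne_zero_iff_ne_and_reachable.mpr ⟨huv, hconn.preconnected u v⟩
    have h2 : G.dist u v ≠ 1 := fun h => hadj (dist_eq_one_iff_adj.mp h)
    omega
  have hpt : ∀ u v : V, (0:ℚ) ≤ (G.dist u v : ℚ) + (if G.Adj u v then 1 else 0)
      - 2 * (if u = v then 0 else 1) := by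
    intro u v
    by_cases huv : u = v
    · subst huv; simp [SimpleGraph.dist_self]
    by_cases hadj : G.Adj u v
    · rw [dist_eq_one_iff_adj.mpr hadj]; simp [huv, hadj]; norm_num
    · have := hge2 u v huv hadj
      have : (2:ℚ) ≤ (G.dist u v : ℚ) := by exact_mod_cast this
      simp only [if_neg hadj, if_neg huv]
      linarith
  have hpt0 : ∀ u v : V, ((G.dist u v : ℚ) + (if G.Adj u v then 1 else 0)
      - 2 * (if u = v then 0 else 1) = 0) ↔ G.dist u v ≤ 2 := by
    intro u v
    by_cases huv : u = v
    · subst huv; simp [SimpleGraph.dist_self]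
    by_cases hadj : G.Adj u v
    · rw [dist_eq_one_iff_adj.mpr hadj]; simp [huv, hadj]; norm_num
    · have h2 := hge2 u v huv hadj
      simp only [if_neg hadj, if_neg huv]
      constructor
      · intro h
        have : (G.dist u v : ℚ) = 2 := by linarith
        have : G.dist u v = 2 := by exact_mod_cast this
        omega
      · intro h
        have : G.dist u v = 2 := by omega
        rw [this]; norm_num
  set T := ∑ u : V, ∑ v : V, ((G.dist u v : ℚ) + (if G.Adj u v then 1 else 0)
      - 2 * (if u = v then 0 else 1)) with hTdef
  have hTval : T = S + 2 * ((n:ℚ) - 1) - 2 * ((n:ℚ) * ((n:ℚ) - 1)) := by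
    rw [hTdef]
    simp only [Finset.sum_sub_distrib, Finset.sum_add_distrib, ← Finset.mul_sum]
    rw [hA, hB, ← hS]
  have hTnn : 0 ≤ T := Finset.sum_nonneg fun u _ => Finset.sum_nonneg fun v _ => hpt u v
  have hT0 : T = 0 ↔ ∀ u v : V, G.dist u v ≤ 2 := by
    rw [hTdef]
    rw [Finset.sum_eq_zero_iff_of_nonneg fun u _ => Finset.sum_nonneg fun v _ => hpt u v]
    constructor
    · intro h u v
      have := (Finset.sum_eq_zero_iff_of_nonneg fun v _ => hpt u v).mp (h u (mem_univ u)) v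
        (mem_univ v)
      exact (hpt0 u v).mp this
    · intro h u _
      exact Finset.sum_eq_zero fun v _ => (hpt0 u v).mpr (h u v)
  -- denominator
  have hden : (2 * ((n).choose 2) : ℚ) = (n : ℚ) * ((n : ℚ) - 1) := by
    have hdvd : 2 ∣ n * (n - 1) := by
      rcases Nat.even_or_odd n with h | h
      · exact Dvd.dvd.mul_right h.two_dvd _
      · exact Dvd.dvd.mul_left (Nat.Odd.sub_odd h odd_one).two_dvd _
    have : 2 * n.choose 2 = n * (n - 1) := by
      rw [Nat.choose_two_right, Nat.mul_div_cancel' hdvd]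
    calc (2 * ((n).choose 2) : ℚ) = ((2 * n.choose 2 : ℕ) : ℚ) := by push_cast; ring
      _ = ((n * (n - 1) : ℕ) : ℚ) := by rw [this]
      _ = (n : ℚ) * ((n : ℚ) - 1) := by push_cast [Nat.cast_sub hn1]; ring
  have hnQ : (3 : ℚ) ≤ (n : ℚ) := by exact_mod_cast h3
  have hD : (0:ℚ) < (n : ℚ) * ((n : ℚ) - 1) := by nlinarith
  have havg : avgDist G = S / ((n : ℚ) * ((n : ℚ) - 1)) := by
    rw [avgDist, ← hS, ← hn]
    norm_num [← hden]
  have hrhs : (2 - 2 / (n:ℚ)) * ((n : ℚ) * ((n : ℚ) - 1)) = 2 * ((n:ℚ) - 1) ^ 2 := by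
    field_simp
  constructor
  · rw [havg, le_div_iff₀ hD, hrhs]
    nlinarith [hTnn, hTval]
  · rw [havg, div_eq_iff (ne_of_gt hD), hrhs, ← hstar, ← hT0]
    constructor
    · intro h; nlinarith [hTval]
    · intro h; nlinarith [hTval]
end

section
/- Let G be the graph consisting of a clique on N-1 vertices together with one additional (peripheral) vertex joined to exactly α of the clique vertices, where 1 ≤ α ≤ N-1 and N ≥ 4. Then the sum over all vertices of the local clustering coefficients equals N - α(N-1-α)/binom(N-1,2). -/
open SimpleGraph Finset

/-- Type I almost complete graph: all vertices other than `p` form a clique, and the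
peripheral vertex `p` is adjacent exactly to the vertices in `A`. -/
def acGraphI {V : Type*} [DecidableEq V] (p : V) (A : Finset V) : SimpleGraph V where
  Adj u v := u ≠ v ∧ ((u ≠ p ∧ v ≠ p) ∨ (u = p ∧ v ∈ A) ∨ (v = p ∧ u ∈ A))
  symm := ⟨by intro u v h; exact ⟨h.1.symm, by tauto⟩⟩
  loopless := ⟨fun u h => h.1 rfl⟩


section AuxAC

set_option linter.unusedSectionVars false
variable {V : Type*} [Fintype V] [DecidableEq V]

lemma adjI {p : V} {A : Finset V} {u v : V} :
    (acGraphI p A).Adj u v ↔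
      u ≠ v ∧ ((u ≠ p ∧ v ≠ p) ∨ (u = p ∧ v ∈ A) ∨ (v = p ∧ u ∈ A)) := Iff.rfl

instance instDecAdjI (p : V) (A : Finset V) : DecidableRel (acGraphI p A).Adj := fun u v =>
  decidable_of_iff _ adjI.symm

lemma nbr_p (p : V) (A : Finset V) (hp : p ∉ A) :
    univ.filter ((acGraphI p A).Adj p) = A := by
  ext v
  rw [mem_filter, adjI]
  constructor
  · rintro ⟨-, h1, (⟨h,_⟩|⟨_,h⟩|⟨rfl,h⟩)⟩
    · exact absurd rfl h
    · exact h
    · exact absurd h hp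
  · intro hv; exact ⟨mem_univ _, fun h => hp (h ▸ hv), Or.inr (Or.inl ⟨rfl, hv⟩)⟩

lemma nbr_mem (p : V) (A : Finset V) (hp : p ∉ A) {u : V} (hu : u ∈ A) :
    univ.filter ((acGraphI p A).Adj u) = univ \ {u} := by
  have hup : u ≠ p := fun h => hp (h ▸ hu)
  ext v
  rw [mem_filter, adjI, mem_sdiff, mem_singleton]
  constructor
  · rintro ⟨-, h1, -⟩; exact ⟨mem_univ _, fun h => h1 h.symm⟩
  · rintro ⟨-, hv⟩
    refine ⟨mem_univ _, fun h => hv h.symm, ?_⟩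
    by_cases hvp : v = p
    · exact Or.inr (Or.inr ⟨hvp, hu⟩)
    · exact Or.inl ⟨hup, hvp⟩

lemma nbr_rest (p : V) (A : Finset V) {u : V} (hu : u ∉ A) (hup : u ≠ p) :
    univ.filter ((acGraphI p A).Adj u) = univ \ {u, p} := by
  ext v
  rw [mem_filter, adjI, mem_sdiff, mem_insert]
  rw [mem_singleton]
  constructor
  · rintro ⟨-, h1, (⟨_,h⟩|⟨h,_⟩|⟨rfl,h⟩)⟩
    · exact ⟨mem_univ _, fun hc => (hc.elim (fun h' => h1 h'.symm) h)⟩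
    · exact absurd h hup
    · exact absurd h hu
  · rintro ⟨-, hv⟩
    push_neg at hv
    exact ⟨mem_univ _, fun h => hv.1 h.symm, Or.inl ⟨hup, hv.2⟩⟩

set_option linter.unusedSectionVars false
variable {V : Type*} [Fintype V] [DecidableEq V]

lemma deg_eq (G : SimpleGraph V) [DecidableRel G.Adj] (u : V) :
    deg G u = (univ.filter (G.Adj u)).card := by
  have h : G.neighborSet u = ↑(univ.filter (G.Adj u)) := by ext v; simp [SimpleGraph.neighborSet]
  rw [deg, h, Set.ncard_coe_finset]

lemma triC_eq (G : SimpleGraph V) [DecidableRel G.Adj] (u : V) :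
    triC G u =
      ((univ.filter fun q : V × V => G.Adj u q.1 ∧ G.Adj u q.2 ∧ G.Adj q.1 q.2).card : ℚ) / 2 := by
  have h : {p : V × V | G.Adj u p.1 ∧ G.Adj u p.2 ∧ G.Adj p.1 p.2} =
      ↑(univ.filter fun q : V × V => G.Adj u q.1 ∧ G.Adj u q.2 ∧ G.Adj q.1 q.2) := by
    ext q; simp
  rw [triC, h, Set.ncard_coe_finset]

set_option linter.unusedSectionVars false
variable {V : Type*} [Fintype V] [DecidableEq V]

lemma tri_filter_eq (G : SimpleGraph V) [DecidableRel G.Adj] (u : V) :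
    (univ.filter fun q : V × V => G.Adj u q.1 ∧ G.Adj u q.2 ∧ G.Adj q.1 q.2) =
      ((univ.filter (G.Adj u)) ×ˢ (univ.filter (G.Adj u))).filter
        (fun q => G.Adj q.1 q.2) := by
  ext q
  simp only [mem_filter, mem_product, mem_univ, true_and, and_assoc]

lemma tri_p (p : V) (A : Finset V) (hp : p ∉ A) :
    (univ.filter fun q : V × V =>
        (acGraphI p A).Adj p q.1 ∧ (acGraphI p A).Adj p q.2 ∧ (acGraphI p A).Adj q.1 q.2) =
      A.offDiag := by
  rw [tri_filter_eq, nbr_p p A hp]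
  ext q
  rw [mem_filter, Finset.mem_offDiag, mem_product, adjI]
  constructor
  · rintro ⟨⟨h1, h2⟩, h3, -⟩; exact ⟨h1, h2, h3⟩
  · rintro ⟨h1, h2, h3⟩
    exact ⟨⟨h1, h2⟩, h3, Or.inl ⟨fun h => hp (h ▸ h1), fun h => hp (h ▸ h2)⟩⟩

lemma tri_rest (p : V) (A : Finset V) {u : V} (hu : u ∉ A) (hup : u ≠ p) :
    (univ.filter fun q : V × V =>
        (acGraphI p A).Adj u q.1 ∧ (acGraphI p A).Adj u q.2 ∧ (acGraphI p A).Adj q.1 q.2) =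
      (univ \ {u, p}).offDiag := by
  rw [tri_filter_eq, nbr_rest p A hu hup]
  ext q
  rw [mem_filter, Finset.mem_offDiag, mem_product, adjI]
  constructor
  · rintro ⟨⟨h1, h2⟩, h3, -⟩; exact ⟨h1, h2, h3⟩
  · rintro ⟨h1, h2, h3⟩
    rw [mem_sdiff, mem_insert, mem_singleton] at h1 h2
    push_neg at h1 h2
    exact ⟨⟨by rw [mem_sdiff, mem_insert, mem_singleton]; push_neg; exact h1,
            by rw [mem_sdiff, mem_insert, mem_singleton]; push_neg; exact h2⟩,
      h3, Or.inl ⟨h1.2.2, h2.2.2⟩⟩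

lemma tri_mem (p : V) (A : Finset V) (hp : p ∉ A) {u : V} (hu : u ∈ A) :
    (univ.filter fun q : V × V =>
        (acGraphI p A).Adj u q.1 ∧ (acGraphI p A).Adj u q.2 ∧ (acGraphI p A).Adj q.1 q.2) =
      (univ \ {u, p}).offDiag ∪ ({p} ×ˢ (A \ {u})) ∪ ((A \ {u}) ×ˢ {p}) := by
  have hup : u ≠ p := fun h => hp (h ▸ hu)
  rw [tri_filter_eq, nbr_mem p A hp hu]
  ext q
  rw [mem_filter, mem_union, mem_union, Finset.mem_offDiag, mem_product, mem_product,
    mem_product, adjI, mem_singleton, mem_singleton]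
  simp only [mem_sdiff, mem_singleton, mem_insert, mem_univ, true_and]
  constructor
  · rintro ⟨⟨h1, h2⟩, h3, (⟨h4, h5⟩|⟨h4, h5⟩|⟨h4, h5⟩)⟩
    · exact Or.inl (Or.inl ⟨not_or.mpr ⟨h1, h4⟩, not_or.mpr ⟨h2, h5⟩, h3⟩)
    · exact Or.inl (Or.inr ⟨h4, h5, h2⟩)
    · exact Or.inr ⟨⟨h5, h1⟩, h4⟩
  · rintro (((⟨hh1, hh2, h5⟩)|⟨h1, h2, h3⟩)|⟨⟨h1, h2⟩, h3⟩)
    · obtain ⟨h1, h2⟩ := not_or.mp hh1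
      obtain ⟨h3, h4⟩ := not_or.mp hh2
      exact ⟨⟨h1, h3⟩, h5, Or.inl ⟨h2, h4⟩⟩
    · refine ⟨⟨?_, h3⟩, ?_, Or.inr (Or.inl ⟨h1, h2⟩)⟩
      · rw [h1]; exact hup.symm
      · rw [h1]; exact fun h => hp (by rw [h]; exact h2)
    · refine ⟨⟨h2, ?_⟩, ?_, Or.inr (Or.inr ⟨h3, h1⟩)⟩
      · rw [h3]; exact hup.symm
      · rw [h3]; exact fun h => hp (by rw [← h]; exact h1)

set_option maxHeartbeats 800000 in
lemma clust_p (p : V) (A : Finset V) (hp : p ∉ A) : clust (acGraphI p A) p = 1 := by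
  set G := acGraphI p A with hG
  have hdp : deg G p = A.card := by rw [hG, deg_eq, nbr_p p A hp]
  by_cases h1 : A.card ≤ 1
  · rw [clust, if_pos (by rw [hdp]; exact h1)]
  · rw [clust, if_neg (by rw [hdp]; exact h1), hdp]
    have htri : triC G p = ((A.offDiag.card : ℚ)) / 2 := by
      rw [hG, triC_eq, tri_p p A hp]
    rw [htri, Finset.offDiag_card, Nat.cast_choose_two]
    have h2 : (2 : ℚ) ≤ (A.card : ℚ) := by exact_mod_cast (by omega : 2 ≤ A.card)
    have hcast : ((A.card * A.card - A.card : ℕ) : ℚ) = A.card * ((A.card : ℚ) - 1) := by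
      have hle : A.card ≤ A.card * A.card := Nat.le_mul_of_pos_left _ (by omega)
      push_cast [Nat.cast_sub hle]
      ring
    rw [hcast]
    have hx : (A.card : ℚ) * ((A.card : ℚ) - 1) / 2 ≠ 0 := by
      have : (0 : ℚ) < (A.card : ℚ) * ((A.card : ℚ) - 1) / 2 := by nlinarith
      exact ne_of_gt this
    exact div_self hx

set_option maxHeartbeats 800000 in
lemma clust_rest (p : V) (A : Finset V) {u : V} (hu : u ∉ A) (hup : u ≠ p)
    (h4 : 4 ≤ Fintype.card V) : clust (acGraphI p A) u = 1 := by
  set G := acGraphI p A with hG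
  have hcard2 : ({u, p} : Finset V).card = 2 := by
    rw [Finset.card_insert_of_notMem (by simpa using hup), Finset.card_singleton]
  have hc : (univ \ ({u, p} : Finset V)).card = Fintype.card V - 2 := by
    rw [Finset.card_univ_diff, hcard2]
  have hdu : deg G u = Fintype.card V - 2 := by
    rw [hG, deg_eq, nbr_rest p A hu hup, hc]
  have hm : 2 ≤ Fintype.card V - 2 := by omega
  rw [clust, if_neg (by omega), hdu]
  have htri : triC G u = (((univ \ ({u, p} : Finset V)).offDiag.card : ℚ)) / 2 := by
    rw [hG, triC_eq, tri_rest p A hu hup]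
  rw [htri, Finset.offDiag_card, hc, Nat.cast_choose_two]
  set m := Fintype.card V - 2 with hmdef
  have h2 : (2 : ℚ) ≤ (m : ℚ) := by exact_mod_cast hm
  have hcast : ((m * m - m : ℕ) : ℚ) = (m : ℚ) * ((m : ℚ) - 1) := by
    have hle : m ≤ m * m := Nat.le_mul_of_pos_left _ (by omega)
    push_cast [Nat.cast_sub hle]
    ring
  rw [hcast]
  have hx : (m : ℚ) * ((m : ℚ) - 1) / 2 ≠ 0 := by
    have : (0 : ℚ) < (m : ℚ) * ((m : ℚ) - 1) / 2 := by nlinarith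
    exact ne_of_gt this
  exact div_self hx

set_option maxHeartbeats 800000 in
lemma clust_mem (p : V) (A : Finset V) (hp : p ∉ A) {u : V} (hu : u ∈ A)
    (h4 : 4 ≤ Fintype.card V) :
    clust (acGraphI p A) u =
      ((((Fintype.card V - 2) * (Fintype.card V - 3) + 2 * (A.card - 1) : ℕ)) : ℚ) / 2 /
        (((Fintype.card V - 1).choose 2 : ℕ) : ℚ) := by
  set G := acGraphI p A with hG
  have hup : u ≠ p := fun h => hp (h ▸ hu)
  have hdu : deg G u = Fintype.card V - 1 := by
    rw [hG, deg_eq, nbr_mem p A hp hu, Finset.card_univ_diff, Finset.card_singleton]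
  rw [clust, if_neg (by omega), hdu]
  congr 1
  -- triC computation
  have hcard2 : ({u, p} : Finset V).card = 2 := by
    rw [Finset.card_insert_of_notMem (by simpa using hup), Finset.card_singleton]
  have hc : (univ \ ({u, p} : Finset V)).card = Fintype.card V - 2 := by
    rw [Finset.card_univ_diff, hcard2]
  have hAu : (A \ {u}).card = A.card - 1 := by
    rw [Finset.sdiff_singleton_eq_erase, Finset.card_erase_of_mem hu]
  have hd1 : Disjoint ((univ \ ({u, p} : Finset V)).offDiag) (({p} : Finset V) ×ˢ (A \ {u})) := by
    rw [Finset.disjoint_left]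
    rintro ⟨a, c⟩ h1 h2
    rw [Finset.mem_offDiag] at h1
    rw [Finset.mem_product, Finset.mem_singleton] at h2
    have := h1.1
    rw [Finset.mem_sdiff, Finset.mem_insert, Finset.mem_singleton] at this
    exact this.2 (Or.inr h2.1)
  have hd2 : Disjoint ((univ \ ({u, p} : Finset V)).offDiag ∪ ({p} : Finset V) ×ˢ (A \ {u}))
      ((A \ {u}) ×ˢ ({p} : Finset V)) := by
    rw [Finset.disjoint_left]
    rintro ⟨a, c⟩ h1 h2
    rw [Finset.mem_product, Finset.mem_singleton, Finset.mem_sdiff, Finset.mem_singleton] at h2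
    rw [Finset.mem_union] at h1
    rcases h1 with h1 | h1
    · rw [Finset.mem_offDiag] at h1
      have := h1.2.1
      rw [Finset.mem_sdiff, Finset.mem_insert, Finset.mem_singleton] at this
      exact this.2 (Or.inr h2.2)
    · rw [Finset.mem_product, Finset.mem_singleton, Finset.mem_sdiff, Finset.mem_singleton] at h1
      exact hp (h1.1 ▸ h2.1.1)
  have htri : triC G u =
      (((univ \ ({u, p} : Finset V)).offDiag ∪ ({p} : Finset V) ×ˢ (A \ {u}) ∪
        (A \ {u}) ×ˢ ({p} : Finset V)).card : ℚ) / 2 := by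
    rw [hG, triC_eq, tri_mem p A hp hu]
  rw [htri]
  congr 2
  rw [Finset.card_union_of_disjoint hd2, Finset.card_union_of_disjoint hd1,
    Finset.offDiag_card, hc, Finset.card_product, Finset.card_product, hAu,
    Finset.card_singleton]
  have hm : 2 ≤ Fintype.card V - 2 := by omega
  have : (Fintype.card V - 2) * (Fintype.card V - 2) - (Fintype.card V - 2) =
      (Fintype.card V - 2) * (Fintype.card V - 3) := by
    obtain ⟨k, hk⟩ : ∃ k, Fintype.card V = k + 4 := ⟨Fintype.card V - 4, by omega⟩
    rw [hk]
    simp only [Nat.add_sub_cancel, show k + 4 - 2 = k + 2 from by omega,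
      show k + 4 - 3 = k + 1 from by omega]
    exact Nat.sub_eq_of_eq_add (by ring)
  rw [this]
  ring


end AuxAC

/-- For the type I almost complete graph (clique on `N-1` vertices plus one peripheral
vertex of degree `α = |A|`), the total clustering equals
`N - α(N-1-α) / ((N-1) choose 2)`. -/
theorem stmt8 {V : Type*} [Fintype V] [DecidableEq V] (p : V) (A : Finset V)
    (hp : p ∉ A) (h4 : 4 ≤ Fintype.card V)
    (hA1 : 1 ≤ A.card) (hA2 : A.card ≤ Fintype.card V - 1) :
    totalClust (acGraphI p A) =
      (Fintype.card V : ℚ) -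
        (A.card : ℚ) * ((Fintype.card V : ℚ) - 1 - A.card) /
          ((Fintype.card V - 1).choose 2 : ℚ) := by
  obtain ⟨k, hN⟩ : ∃ k, Fintype.card V = k + 4 := ⟨Fintype.card V - 4, by omega⟩
  obtain ⟨b, hbA⟩ : ∃ b, A.card = b + 1 := ⟨A.card - 1, by omega⟩
  have hbk : b ≤ k + 2 := by omega
  set G := acGraphI p A with hG
  have hsplit : ∑ u ∈ univ \ insert p A, clust G u + ∑ u ∈ insert p A, clust G u
      = totalClust G := Finset.sum_sdiff (subset_univ _)
  have e1 : Fintype.card V - 2 = k + 2 := by omega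
  have e2 : Fintype.card V - 3 = k + 1 := by omega
  have e3 : A.card - 1 = b := by omega
  have e4 : Fintype.card V - 1 = k + 3 := by omega
  have h1 : ∑ u ∈ univ \ insert p A, clust G u = ((univ \ insert p A).card : ℚ) := by
    have hall : ∀ u ∈ univ \ insert p A, clust G u = 1 := by
      intro u hu
      rw [mem_sdiff, mem_insert] at hu
      push_neg at hu
      exact clust_rest p A hu.2.2 hu.2.1 h4
    rw [Finset.sum_congr rfl hall, Finset.sum_const, nsmul_eq_mul, mul_one]
  have hcard : (univ \ insert p A).card = k + 2 - b := by
    rw [Finset.card_univ_diff, Finset.card_insert_of_notMem hp]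
    omega
  have h2 : ∑ u ∈ insert p A, clust G u = clust G p + ∑ u ∈ A, clust G u :=
    Finset.sum_insert hp
  have cval : ∀ u ∈ A, clust G u =
      ((((k + 2) * (k + 1) + 2 * b : ℕ)) : ℚ) / 2 / (((k + 3).choose 2 : ℕ) : ℚ) := by
    intro u hu
    rw [hG, clust_mem p A hp hu h4, e1, e2, e3, e4]
  have h3 : ∑ u ∈ A, clust G u =
      (A.card : ℚ) * (((((k + 2) * (k + 1) + 2 * b : ℕ)) : ℚ) / 2 /
        (((k + 3).choose 2 : ℕ) : ℚ)) := by
    rw [Finset.sum_congr rfl cval, Finset.sum_const, nsmul_eq_mul]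
  rw [← hsplit, h1, hcard, h2, clust_p p A hp, h3, hN, hbA, (by omega : k + 4 - 1 = k + 3)]
  rw [Nat.cast_sub hbk, Nat.cast_choose_two]
  push_cast
  have hk0 : (0 : ℚ) ≤ (k : ℚ) := Nat.cast_nonneg k
  have hD1 : ((k : ℚ) + 3) ≠ 0 := by positivity
  have hD2 : ((k : ℚ) + 2) ≠ 0 := by positivity
  have hD3 : ((k : ℚ) + 3 - 1) ≠ 0 := by intro h; nlinarith
  field_simp
  ring
end

section
/- For N ≥ 4, among all simple graphs with N vertices and binom(N-1,2)+1 ≤ m ≤ binom(N,2)-1 edges, the type I almost complete graph (clique on N-1 vertices plus one peripheral vertex of degree m - binom(N-1,2)) has strictly larger total clustering than any nonisomorphic graph of the same order and size. -/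
open SimpleGraph Finset

namespace ACProof
open SimpleGraph Finset
set_option linter.unusedSectionVars false
set_option linter.unusedVariables false

section
variable {V : Type*} [Fintype V] [DecidableEq V]

/-- ordered count of non-adjacent pairs of distinct neighbors of `u` -/
noncomputable def E2 (G : SimpleGraph V) (u : V) : ℕ :=
  {p : V × V | G.Adj u p.1 ∧ G.Adj u p.2 ∧ p.1 ≠ p.2 ∧ ¬ G.Adj p.1 p.2}.ncard

lemma deg_eq (G : SimpleGraph V) [DecidableRel G.Adj] (u : V) : deg G u = G.degree u := by
  rw [deg, degree, ← Set.ncard_coe_finset (G.neighborFinset u)]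
  congr 1
  simp [neighborFinset]

lemma E2_eq_card (G : SimpleGraph V) [DecidableRel G.Adj] (u : V) :
    E2 G u = ((univ ×ˢ univ).filter fun p : V × V =>
      G.Adj u p.1 ∧ G.Adj u p.2 ∧ p.1 ≠ p.2 ∧ ¬ G.Adj p.1 p.2).card := by
  rw [E2, ← Set.ncard_coe_finset]
  congr 1
  ext p
  simp

lemma edgeCount_eq_card (G : SimpleGraph V) [DecidableRel G.Adj] :
    edgeCount G = G.edgeFinset.card := by
  rw [edgeCount, ← Set.ncard_coe_finset, coe_edgeFinset]

lemma triC_eq (G : SimpleGraph V) [DecidableRel G.Adj] (u : V) :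
    triC G u = ((deg G u * (deg G u - 1) - E2 G u : ℕ) : ℚ) / 2 ∧
    E2 G u ≤ deg G u * (deg G u - 1) := by
  classical
  set s := G.neighborFinset u with hs
  have hset : {p : V × V | G.Adj u p.1 ∧ G.Adj u p.2 ∧ G.Adj p.1 p.2} =
      ↑((s ×ˢ s).filter fun p : V × V => G.Adj p.1 p.2) := by
    ext p; simp [hs, and_assoc]
  have hE2 : E2 G u = ((s ×ˢ s).filter fun p : V × V => p.1 ≠ p.2 ∧ ¬ G.Adj p.1 p.2).card := by
    rw [E2, ← Set.ncard_coe_finset]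
    congr 1
    ext p
    simp [hs, and_assoc]
  have hunion : ((s ×ˢ s).filter fun p : V × V => G.Adj p.1 p.2) ∪
      ((s ×ˢ s).filter fun p : V × V => p.1 ≠ p.2 ∧ ¬ G.Adj p.1 p.2) = s.offDiag := by
    ext p
    simp only [mem_union, mem_filter, mem_offDiag, mem_product]
    constructor
    · rintro (⟨⟨h1, h2⟩, h⟩ | ⟨⟨h1, h2⟩, h, -⟩)
      · exact ⟨h1, h2, G.ne_of_adj h⟩
      · exact ⟨h1, h2, h⟩
    · rintro ⟨h1, h2, h⟩
      by_cases had : G.Adj p.1 p.2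
      · exact Or.inl ⟨⟨h1, h2⟩, had⟩
      · exact Or.inr ⟨⟨h1, h2⟩, h, had⟩
  have hdisj : Disjoint ((s ×ˢ s).filter fun p : V × V => G.Adj p.1 p.2)
      ((s ×ˢ s).filter fun p : V × V => p.1 ≠ p.2 ∧ ¬ G.Adj p.1 p.2) := by
    rw [Finset.disjoint_left]
    intro p hp hq
    simp only [mem_filter] at hp hq
    exact hq.2.2 hp.2
  have hcard : ((s ×ˢ s).filter fun p : V × V => G.Adj p.1 p.2).card + E2 G u
      = deg G u * (deg G u - 1) := by
    rw [hE2, ← card_union_of_disjoint hdisj, hunion, offDiag_card, deg_eq]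
    have h1 : G.degree u = s.card := rfl
    have h2 : s.card * (s.card - 1) = s.card * s.card - s.card := by
      rw [Nat.mul_sub, Nat.mul_one]
    rw [h1, h2]
  constructor
  · rw [triC, hset, Set.ncard_coe_finset]
    congr 2
    omega
  · omega


-- if E2 > 0 then deg ≥ 2
lemma deg_ge_two_of_E2 (G : SimpleGraph V) [DecidableRel G.Adj] (u : V) (h : E2 G u ≠ 0) :
    2 ≤ deg G u := by
  rw [E2] at h
  obtain ⟨⟨a, b⟩, h1, h2, h3, -⟩ := Set.nonempty_of_ncard_ne_zero h
  have hsub : ({a, b} : Finset V) ⊆ G.neighborFinset u := by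
    intro x hx
    rw [mem_insert, mem_singleton] at hx
    rcases hx with rfl | rfl <;> simp [h1, h2]
  have := Finset.card_le_card hsub
  rw [Finset.card_insert_of_notMem (by simpa using h3), Finset.card_singleton] at this
  rw [deg_eq]
  exact this

lemma E2_zero_of_deg_le_one (G : SimpleGraph V) [DecidableRel G.Adj] (u : V)
    (h : deg G u ≤ 1) : E2 G u = 0 := by
  by_contra hne
  have := deg_ge_two_of_E2 G u hne
  omega

lemma clust_eq (G : SimpleGraph V) [DecidableRel G.Adj] (u : V) :
    clust G u = 1 - (E2 G u : ℚ) / ((deg G u : ℚ) * ((deg G u : ℚ) - 1)) := by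
  rw [clust]
  by_cases h : deg G u ≤ 1
  · rw [if_pos h, E2_zero_of_deg_le_one G u h]
    simp
  · rw [if_neg h]
    push_neg at h
    obtain ⟨htri, hle⟩ := triC_eq G u
    rw [htri, Nat.cast_choose_two]
    have hd1 : (1 : ℚ) ≤ (deg G u : ℚ) := by exact_mod_cast Nat.one_le_of_lt h
    have hcast : ((deg G u * (deg G u - 1) - E2 G u : ℕ) : ℚ)
        = (deg G u : ℚ) * ((deg G u : ℚ) - 1) - (E2 G u : ℚ) := by
      push_cast [Nat.cast_sub hle, Nat.cast_sub (show 1 ≤ deg G u by omega)]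
      ring
    rw [hcast]
    have hpos : (0 : ℚ) < (deg G u : ℚ) * ((deg G u : ℚ) - 1) := by
      have h2 : (2 : ℚ) ≤ (deg G u : ℚ) := by exact_mod_cast h
      nlinarith
    have hd1' : (deg G u : ℚ) - 1 ≠ 0 := by
      have h2 : (2 : ℚ) ≤ (deg G u : ℚ) := by exact_mod_cast h
      linarith
    field_simp

lemma totalClust_eq (G : SimpleGraph V) [DecidableRel G.Adj] :
    (∑ u, clust G u) = (Fintype.card V : ℚ) -
      ∑ u, (E2 G u : ℚ) / ((deg G u : ℚ) * ((deg G u : ℚ) - 1)) := by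
  rw [Finset.sum_congr rfl (fun u _ => clust_eq G u), Finset.sum_sub_distrib]
  simp [Finset.card_univ]


section AC
variable {p : V} {A : Finset V} (hp : p ∉ A)

lemma ac_adj (u v : V) : (acGraphI p A).Adj u v ↔
    u ≠ v ∧ ((u ≠ p ∧ v ≠ p) ∨ (u = p ∧ v ∈ A) ∨ (v = p ∧ u ∈ A)) := Iff.rfl

include hp

lemma ac_adj_p (v : V) : (acGraphI p A).Adj p v ↔ v ∈ A := by
  rw [ac_adj]
  constructor
  · rintro ⟨hne, (⟨h, -⟩ | ⟨-, h⟩ | ⟨h, -⟩)⟩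
    · exact absurd rfl h
    · exact h
    · exact absurd (h ▸ hne) (fun hn => hn rfl)
  · intro hv
    have hvp : p ≠ v := fun h => hp (h ▸ hv)
    exact ⟨hvp, Or.inr (Or.inl ⟨rfl, hv⟩)⟩

lemma ac_adj_A (u v : V) (hu : u ∈ A) : (acGraphI p A).Adj u v ↔ u ≠ v := by
  have hup : u ≠ p := fun h => hp (h ▸ hu)
  rw [ac_adj]
  constructor
  · exact fun h => h.1
  · intro hne
    by_cases hvp : v = p
    · exact ⟨hne, Or.inr (Or.inr ⟨hvp, hu⟩)⟩
    · exact ⟨hne, Or.inl ⟨hup, hvp⟩⟩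

lemma ac_adj_periph (u v : V) (hu : u ∉ A) (hup : u ≠ p) :
    (acGraphI p A).Adj u v ↔ u ≠ v ∧ v ≠ p := by
  rw [ac_adj]
  constructor
  · rintro ⟨hne, (⟨-, h⟩ | ⟨h, -⟩ | ⟨-, h⟩)⟩
    · exact ⟨hne, h⟩
    · exact absurd h hup
    · exact absurd h hu
  · rintro ⟨hne, hvp⟩
    exact ⟨hne, Or.inl ⟨hup, hvp⟩⟩

lemma ac_E2_p : E2 (acGraphI p A) p = 0 := by
  rw [E2, Set.ncard_eq_zero (Set.toFinite _)]
  ext ⟨a, b⟩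
  simp only [Set.mem_setOf_eq, Set.mem_empty_iff_false, iff_false, not_and]
  intro h1 h2 h3 h4
  rw [ac_adj_p hp] at h1 h2
  exact h4 ((ac_adj_A hp a b h1).2 h3)

lemma ac_E2_periph (u : V) (hu : u ∉ A) (hup : u ≠ p) : E2 (acGraphI p A) u = 0 := by
  rw [E2, Set.ncard_eq_zero (Set.toFinite _)]
  ext ⟨a, b⟩
  simp only [Set.mem_setOf_eq, Set.mem_empty_iff_false, iff_false, not_and]
  intro h1 h2 h3 h4
  rw [ac_adj_periph hp u a hu hup] at h1
  rw [ac_adj_periph hp u b hu hup] at h2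
  exact h4 ⟨h3, Or.inl ⟨h1.2, h2.2⟩⟩

lemma ac_deg_A (u : V) (hu : u ∈ A) : deg (acGraphI p A) u = Fintype.card V - 1 := by
  have : (acGraphI p A).neighborSet u = ↑(univ.erase u) := by
    ext v
    simp only [mem_neighborSet, ac_adj_A hp u v hu, coe_erase, Set.mem_diff, Set.mem_univ,
      true_and, Set.mem_singleton_iff, coe_univ]
    exact ⟨fun h hh => h hh.symm, fun h hh => h hh.symm⟩
  rw [deg, this, Set.ncard_coe_finset, card_erase_of_mem (mem_univ u), card_univ]

lemma ac_deg_p : deg (acGraphI p A) p = A.card := by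
  have : (acGraphI p A).neighborSet p = ↑A := by
    ext v; simp [mem_neighborSet, ac_adj_p hp]
  rw [deg, this, Set.ncard_coe_finset]

lemma ac_E2_A (u : V) (hu : u ∈ A) :
    E2 (acGraphI p A) u = 2 * (univ \ insert p A).card := by
  classical
  set Bc : Finset V := univ \ insert p A with hBc
  have hpBc : p ∉ Bc := by simp [hBc]
  have hne : u ≠ p := fun h => hp (h ▸ hu)
  have hset : {q : V × V | (acGraphI p A).Adj u q.1 ∧ (acGraphI p A).Adj u q.2 ∧
      q.1 ≠ q.2 ∧ ¬ (acGraphI p A).Adj q.1 q.2} = ↑(({p} ×ˢ Bc) ∪ (Bc ×ˢ {p})) := by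
    ext ⟨a, b⟩
    simp only [Set.mem_setOf_eq, coe_union, Set.mem_union, coe_product, Set.mem_prod,
      mem_coe, mem_singleton, hBc, mem_sdiff, mem_univ, true_and, mem_insert, not_or]
    rw [ac_adj_A hp u a hu, ac_adj_A hp u b hu]
    constructor
    · rintro ⟨h1, h2, h3, h4⟩
      by_cases hap : a = p
      · refine Or.inl ⟨hap, fun h => h3 (hap.trans h.symm), fun hbA => h4 ?_⟩
        · rw [hap]
          exact (ac_adj_p hp b).2 hbA
      · by_cases hbp : b = p
        · refine Or.inr ⟨⟨hap, fun haA => h4 ?_⟩, hbp⟩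
          rw [hbp]
          exact (acGraphI p A).adj_symm ((ac_adj_p hp a).2 haA)
        · exact absurd ((ac_adj_periph hp a b (fun haA => h4 ((ac_adj_A hp a b haA).2 h3)) hap).2
            ⟨h3, hbp⟩) h4
    · rintro (⟨hap, hb1, hb2⟩ | ⟨⟨ha1, ha2⟩, hbp⟩)
      · subst hap
        refine ⟨hne, fun h => hb2 (h ▸ hu), fun h => hb1 h.symm, ?_⟩
        rw [ac_adj_p hp]
        exact hb2
      · refine ⟨fun h => ha2 (h ▸ hu), fun h => hne (h.trans hbp),
          fun h => ha1 (h.trans hbp), fun h => ?_⟩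
        rw [hbp] at h
        exact ha2 ((ac_adj_p hp a).1 ((acGraphI p A).adj_symm h))
  rw [E2, hset, Set.ncard_coe_finset, card_union_of_disjoint, card_product, card_product]
  · simp [two_mul]
  · rw [Finset.disjoint_left]
    rintro ⟨a, b⟩ hab hab'
    simp only [mem_product, mem_singleton] at hab hab'
    exact hpBc (hab.1 ▸ hab'.1)


end AC

lemma pen_bound (G : SimpleGraph V) [DecidableRel G.Adj] (u : V) :
    (E2 G u : ℚ) / (((Fintype.card V : ℚ) - 1) * ((Fintype.card V : ℚ) - 2)) ≤
    (E2 G u : ℚ) / ((deg G u : ℚ) * ((deg G u : ℚ) - 1)) := by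
  by_cases h : E2 G u = 0
  · simp [h]
  · have h2 : 2 ≤ deg G u := deg_ge_two_of_E2 G u h
    have hlt : deg G u < Fintype.card V := by
      rw [deg_eq]; exact G.degree_lt_card_verts u
    have hd2 : (2 : ℚ) ≤ (deg G u : ℚ) := by exact_mod_cast h2
    have hdN : (deg G u : ℚ) ≤ (Fintype.card V : ℚ) - 1 := by
      have : deg G u + 1 ≤ Fintype.card V := hlt
      have := (Nat.cast_le (α := ℚ)).2 this
      push_cast at this
      linarith
    have hpos : (0:ℚ) < (deg G u : ℚ) * ((deg G u : ℚ) - 1) := by nlinarith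
    have hE : (0:ℚ) ≤ (E2 G u : ℚ) := Nat.cast_nonneg _
    apply div_le_div_of_nonneg_left hE hpos
    nlinarith


lemma totalClust_le (G : SimpleGraph V) [DecidableRel G.Adj] :
    totalClust G ≤ (Fintype.card V : ℚ) -
      (∑ u, (E2 G u : ℚ)) / (((Fintype.card V : ℚ) - 1) * ((Fintype.card V : ℚ) - 2)) := by
  rw [totalClust, totalClust_eq]
  have := Finset.sum_le_sum (fun u (_ : u ∈ univ) => pen_bound G u)
  rw [Finset.sum_div]
  linarith


section AC2
variable {p : V} {A : Finset V} (hp : p ∉ A)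

include hp in
lemma ac_totalClust (hN : 2 ≤ Fintype.card V) :
    totalClust (acGraphI p A) = (Fintype.card V : ℚ) -
      (A.card : ℚ) * (2 * ((univ \ insert p A).card : ℚ)) /
        (((Fintype.card V : ℚ) - 1) * ((Fintype.card V : ℚ) - 2)) := by
  classical
  letI : DecidableRel (acGraphI p A).Adj := Classical.decRel _
  rw [totalClust, totalClust_eq]
  congr 1
  have hzero : ∀ u ∈ univ, u ∉ A →
      (E2 (acGraphI p A) u : ℚ) / ((deg (acGraphI p A) u : ℚ) * ((deg (acGraphI p A) u : ℚ) - 1)) = 0 := by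
    intro u _ hu
    by_cases hup : u = p
    · rw [hup, ac_E2_p hp]; simp
    · rw [ac_E2_periph hp u hu hup]; simp
  rw [← Finset.sum_subset (subset_univ A) hzero]
  have hterm : ∀ u ∈ A,
      (E2 (acGraphI p A) u : ℚ) / ((deg (acGraphI p A) u : ℚ) * ((deg (acGraphI p A) u : ℚ) - 1))
      = (2 * ((univ \ insert p A).card : ℚ)) /
        (((Fintype.card V : ℚ) - 1) * ((Fintype.card V : ℚ) - 2)) := by
    intro u hu
    rw [ac_E2_A hp u hu, ac_deg_A hp u hu]
    have h1 : ((Fintype.card V - 1 : ℕ) : ℚ) = (Fintype.card V : ℚ) - 1 := by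
      push_cast [Nat.cast_sub (by omega : 1 ≤ Fintype.card V)]; ring
    rw [h1]
    push_cast
    ring_nf
  rw [Finset.sum_congr rfl hterm, Finset.sum_const, nsmul_eq_mul]
  ring
end AC2

section CNT
variable (H : SimpleGraph V) [DecidableRel H.Adj] [DecidableRel Hᶜ.Adj]

/-- number of common H-neighbors -/
def cn (a b : V) : ℕ := (univ.filter fun u => H.Adj u a ∧ H.Adj u b).card

/-- ordered pairs of complement-adjacent vertices -/
def cP : Finset (V × V) := (univ ×ˢ univ).filter fun q => Hᶜ.Adj q.1 q.2

lemma cP_card : (cP H).card = ∑ v, Hᶜ.degree v := by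
  rw [cP]
  have : ((univ ×ˢ univ).filter fun q : V × V => Hᶜ.Adj q.1 q.2)
      = univ.biUnion (fun a => {a} ×ˢ Hᶜ.neighborFinset a) := by
    ext ⟨a, b⟩
    simp [mem_neighborFinset]
  rw [this, card_biUnion]
  · apply Finset.sum_congr rfl
    intro a _
    rw [card_product, card_singleton, one_mul, card_neighborFinset_eq_degree]
  · intro a _ b _ hab
    rw [Function.onFun, Finset.disjoint_left]
    rintro ⟨x, y⟩ hx hy
    simp only [mem_product, mem_singleton] at hx hy
    exact hab (hx.1 ▸ hy.1)

lemma sum_E2_eq : ∑ u, E2 H u = ∑ q ∈ cP H, cn H q.1 q.2 := by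
  have hrw : ∀ u, E2 H u = ∑ q ∈ univ ×ˢ univ,
      if (Hᶜ.Adj q.1 q.2 ∧ H.Adj u q.1 ∧ H.Adj u q.2) then 1 else 0 := by
    intro u
    have hfe : {p : V × V | H.Adj u p.1 ∧ H.Adj u p.2 ∧ p.1 ≠ p.2 ∧ ¬ H.Adj p.1 p.2} =
        ↑((univ ×ˢ univ).filter fun q : V × V =>
          Hᶜ.Adj q.1 q.2 ∧ H.Adj u q.1 ∧ H.Adj u q.2) := by
      ext q
      simp only [Set.mem_setOf_eq, coe_filter, compl_adj, mem_product, mem_univ, true_and,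
        Set.mem_setOf_eq]
      tauto
    rw [E2, hfe, Set.ncard_coe_finset, Finset.card_filter]
  calc ∑ u, E2 H u
      = ∑ u, ∑ q ∈ univ ×ˢ univ,
          (if (Hᶜ.Adj q.1 q.2 ∧ H.Adj u q.1 ∧ H.Adj u q.2) then 1 else 0) := by
        exact Finset.sum_congr rfl fun u _ => hrw u
    _ = ∑ q ∈ univ ×ˢ univ, ∑ u,
          (if (Hᶜ.Adj q.1 q.2 ∧ H.Adj u q.1 ∧ H.Adj u q.2) then 1 else 0) := Finset.sum_comm
    _ = ∑ q ∈ univ ×ˢ univ,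
          (if Hᶜ.Adj q.1 q.2 then cn H q.1 q.2 else 0) := by
        apply Finset.sum_congr rfl
        intro q _
        by_cases hq : Hᶜ.Adj q.1 q.2
        · rw [if_pos hq, cn, Finset.card_filter]
          apply Finset.sum_congr rfl
          intro u _
          simp [hq]
        · simp [hq]
    _ = ∑ q ∈ cP H, cn H q.1 q.2 := by rw [cP, Finset.sum_filter]

lemma cn_lb (a b : V) (hab : Hᶜ.Adj a b) :
    Fintype.card V ≤ cn H a b + Hᶜ.degree a + Hᶜ.degree b ∧
    ((∃ c, Hᶜ.Adj a c ∧ Hᶜ.Adj b c) →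
      Fintype.card V + 1 ≤ cn H a b + Hᶜ.degree a + Hᶜ.degree b) := by
  classical
  set Ca : Finset V := insert a (Hᶜ.neighborFinset a) with hCa
  set Cb : Finset V := insert b (Hᶜ.neighborFinset b) with hCb
  have hCaM : ∀ x, x ∈ Ca ↔ ¬ H.Adj x a := by
    intro x
    simp only [hCa, mem_insert, mem_neighborFinset]
    constructor
    · rintro (rfl | h)
      · exact fun h => H.loopless.irrefl x h
      · exact ((H.compl_adj _ _).1 (Hᶜ.adj_symm h)).2
    · intro h
      by_cases hx : x = a
      · exact Or.inl hx
      · exact Or.inr (Hᶜ.adj_symm ((H.compl_adj _ _).2 ⟨hx, h⟩))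
  have hCbM : ∀ x, x ∈ Cb ↔ ¬ H.Adj x b := by
    intro x
    simp only [hCb, mem_insert, mem_neighborFinset]
    constructor
    · rintro (rfl | h)
      · exact fun h => H.loopless.irrefl x h
      · exact ((H.compl_adj _ _).1 (Hᶜ.adj_symm h)).2
    · intro h
      by_cases hx : x = b
      · exact Or.inl hx
      · exact Or.inr (Hᶜ.adj_symm ((H.compl_adj _ _).2 ⟨hx, h⟩))
  have hcover : ∀ x, x ∈ (univ.filter fun u => H.Adj u a ∧ H.Adj u b) ∪ (Ca ∪ Cb) := by
    intro x
    rw [mem_union, mem_filter]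
    by_cases h1 : H.Adj x a
    · by_cases h2 : H.Adj x b
      · exact Or.inl ⟨mem_univ x, h1, h2⟩
      · exact Or.inr (mem_union_right _ ((hCbM x).2 h2))
    · exact Or.inr (mem_union_left _ ((hCaM x).2 h1))
  have hN : Fintype.card V ≤ (univ.filter fun u => H.Adj u a ∧ H.Adj u b).card + (Ca ∪ Cb).card := by
    calc Fintype.card V = (univ : Finset V).card := (card_univ).symm
    _ ≤ ((univ.filter fun u => H.Adj u a ∧ H.Adj u b) ∪ (Ca ∪ Cb)).card := by
        apply card_le_card
        intro x _
        exact hcover x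
    _ ≤ _ := card_union_le _ _
  have hCaCard : Ca.card = Hᶜ.degree a + 1 := by
    rw [hCa, card_insert_of_notMem (by simp [mem_neighborFinset]), card_neighborFinset_eq_degree]
  have hCbCard : Cb.card = Hᶜ.degree b + 1 := by
    rw [hCb, card_insert_of_notMem (by simp [mem_neighborFinset]), card_neighborFinset_eq_degree]
  have hab' : a ≠ b := Hᶜ.ne_of_adj hab
  have hsub : ({a, b} : Finset V) ⊆ Ca ∩ Cb := by
    intro x hx
    rw [mem_insert, mem_singleton] at hx
    rw [mem_inter]
    rcases hx with rfl | rfl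
    · exact ⟨mem_insert_self _ _, by
        rw [hCb, mem_insert]; exact Or.inr (by rw [mem_neighborFinset]; exact Hᶜ.adj_symm hab)⟩
    · exact ⟨by rw [hCa, mem_insert]; exact Or.inr (by rw [mem_neighborFinset]; exact hab), mem_insert_self _ _⟩
  have hunion : (Ca ∪ Cb).card + (Ca ∩ Cb).card = Ca.card + Cb.card :=
    card_union_add_card_inter _ _
  constructor
  · have h2 : 2 ≤ (Ca ∩ Cb).card := by
      calc 2 = ({a, b} : Finset V).card := by
            rw [card_insert_of_notMem (by simpa using hab'), card_singleton]
      _ ≤ _ := card_le_card hsub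
    rw [cn]
    omega
  · rintro ⟨c, hac, hbc⟩
    have hca : c ≠ a := fun h => Hᶜ.loopless.irrefl a (h ▸ hac)
    have hcb : c ≠ b := fun h => Hᶜ.loopless.irrefl b (h ▸ hbc)
    have hsub3 : ({a, b, c} : Finset V) ⊆ Ca ∩ Cb := by
      intro x hx
      simp only [mem_insert, mem_singleton] at hx
      rcases hx with rfl | rfl | rfl
      · exact hsub (by simp)
      · exact hsub (by simp)
      · rw [mem_inter, hCa, hCb, mem_insert, mem_insert, mem_neighborFinset, mem_neighborFinset]
        exact ⟨Or.inr hac, Or.inr hbc⟩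
    have h3 : 3 ≤ (Ca ∩ Cb).card := by
      calc 3 = ({a, b, c} : Finset V).card := by
            rw [card_insert_of_notMem (by simp [hab', hca.symm]),
              card_insert_of_notMem (by simpa using hcb.symm), card_singleton]
      _ ≤ _ := card_le_card hsub3
    rw [cn]
    omega

lemma fdeg_add_le (a b : V) (hab : Hᶜ.Adj a b) :
    Hᶜ.degree a + Hᶜ.degree b ≤ Hᶜ.edgeFinset.card + 1 := by
  classical
  have hab' : a ≠ b := Hᶜ.ne_of_adj hab
  have hinter : Hᶜ.incidenceFinset a ∩ Hᶜ.incidenceFinset b ⊆ {s(a, b)} := by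
    intro e he
    rw [mem_inter, mem_incidenceFinset, mem_incidenceFinset] at he
    rw [mem_singleton]
    exact (Sym2.mem_and_mem_iff hab').1 ⟨he.1.2, he.2.2⟩
  have hunion : Hᶜ.incidenceFinset a ∪ Hᶜ.incidenceFinset b ⊆ Hᶜ.edgeFinset := by
    intro e he
    rw [mem_union, mem_incidenceFinset, mem_incidenceFinset] at he
    rw [mem_edgeFinset]
    rcases he with h | h
    · exact h.1
    · exact h.1
  have := card_union_add_card_inter (Hᶜ.incidenceFinset a) (Hᶜ.incidenceFinset b)
  have h1 := card_le_card hunion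
  have h2 := card_le_card hinter
  rw [card_incidenceFinset_eq_degree, card_incidenceFinset_eq_degree] at this
  simp only [card_singleton] at h2
  omega

lemma common_of_dominating
    (hQ : ∀ a b, Hᶜ.Adj a b → ∀ e ∈ Hᶜ.edgeFinset, a ∈ e ∨ b ∈ e)
    (hnstar : ¬ ∃ q, ∀ e ∈ Hᶜ.edgeFinset, q ∈ e) :
    ∀ a b, Hᶜ.Adj a b → ∃ c, Hᶜ.Adj a c ∧ Hᶜ.Adj b c := by
  intro a b hab
  push_neg at hnstar
  obtain ⟨e1, he1, hae1⟩ := hnstar a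
  obtain ⟨e2, he2, hbe2⟩ := hnstar b
  have hb1 : b ∈ e1 := (hQ a b hab e1 he1).resolve_left (fun h => hae1 h)
  have ha2 : a ∈ e2 := (hQ a b hab e2 he2).resolve_right (fun h => hbe2 h)
  obtain ⟨c, rfl⟩ := Sym2.mem_iff_exists.1 hb1
  obtain ⟨d, rfl⟩ := Sym2.mem_iff_exists.1 ha2
  have hbc : Hᶜ.Adj b c := by rwa [mem_edgeFinset, mem_edgeSet] at he1
  have had : Hᶜ.Adj a d := by rwa [mem_edgeFinset, mem_edgeSet] at he2
  have hca : c ≠ a := by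
    intro h
    exact hae1 (by rw [h]; exact Sym2.mem_mk_right b a)
  have := hQ b c hbc s(a, d) he2
  rcases this with h | h
  · exact absurd h hbe2
  · rw [Sym2.mem_iff] at h
    rcases h with h | h
    · exact absurd h hca
    · exact ⟨c, h ▸ had, hbc⟩

lemma inc_inter_le (a b : V) (hab : Hᶜ.Adj a b) :
    (Hᶜ.incidenceFinset a ∩ Hᶜ.incidenceFinset b).card ≤ 1 := by
  have hab' : a ≠ b := Hᶜ.ne_of_adj hab
  have hinter : Hᶜ.incidenceFinset a ∩ Hᶜ.incidenceFinset b ⊆ {s(a, b)} := by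
    intro e he
    rw [mem_inter, mem_incidenceFinset, mem_incidenceFinset] at he
    rw [mem_singleton]
    exact (Sym2.mem_and_mem_iff hab').1 ⟨he.1.2, he.2.2⟩
  simpa using card_le_card hinter

lemma dominating_of_deg_sum (a b : V) (hab : Hᶜ.Adj a b)
    (hsum : Hᶜ.edgeFinset.card + 1 ≤ Hᶜ.degree a + Hᶜ.degree b) :
    ∀ e ∈ Hᶜ.edgeFinset, a ∈ e ∨ b ∈ e := by
  have hunion : Hᶜ.incidenceFinset a ∪ Hᶜ.incidenceFinset b ⊆ Hᶜ.edgeFinset := by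
    intro e he
    rw [mem_union, mem_incidenceFinset, mem_incidenceFinset] at he
    rw [mem_edgeFinset]
    rcases he with h | h
    · exact h.1
    · exact h.1
  have h1 := card_union_add_card_inter (Hᶜ.incidenceFinset a) (Hᶜ.incidenceFinset b)
  rw [card_incidenceFinset_eq_degree, card_incidenceFinset_eq_degree] at h1
  have h2 := inc_inter_le H a b hab
  have h3 : Hᶜ.edgeFinset.card ≤ (Hᶜ.incidenceFinset a ∪ Hᶜ.incidenceFinset b).card := by omega
  have := Finset.eq_of_subset_of_card_le hunion h3
  intro e he
  rw [← this, mem_union, mem_incidenceFinset, mem_incidenceFinset] at he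
  rcases he with h | h
  · exact Or.inl h.2
  · exact Or.inr h.2

lemma main_count (hnstar : ¬ ∃ q, ∀ e ∈ Hᶜ.edgeFinset, q ∈ e)
    (ht1 : 1 ≤ Hᶜ.edgeFinset.card) :
    2 * (Hᶜ.edgeFinset.card : ℚ) *
        ((Fintype.card V : ℚ) - 1 - (Hᶜ.edgeFinset.card : ℚ)) + 2 ≤
      ∑ u, (E2 H u : ℚ) := by
  classical
  set t : ℕ := Hᶜ.edgeFinset.card with hT
  set N : ℕ := Fintype.card V with hN
  have hsum : (∑ u, (E2 H u : ℚ)) = ∑ q ∈ cP H, (cn H q.1 q.2 : ℚ) := by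
    rw [← Nat.cast_sum, sum_E2_eq H, Nat.cast_sum]
  have hcards : (cP H).card = 2 * t := by
    rw [cP_card H, sum_degrees_eq_twice_card_edges]
  by_cases hcaseB : ∀ q ∈ cP H, t + 1 ≤ Hᶜ.degree q.1 + Hᶜ.degree q.2
  · -- dominating case: all pairs have a common neighbor
    have hQ : ∀ a b, Hᶜ.Adj a b → ∀ e ∈ Hᶜ.edgeFinset, a ∈ e ∨ b ∈ e := by
      intro a b hab
      apply dominating_of_deg_sum H a b hab
      exact hcaseB (a, b) (by simp only [cP, mem_filter, mem_product, mem_univ, true_and]; exact hab)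
    have hcom := common_of_dominating H hQ hnstar
    have hterm : ∀ q ∈ cP H, ((N : ℚ) + 1) - (Hᶜ.degree q.1 : ℚ) - (Hᶜ.degree q.2 : ℚ)
        ≤ (cn H q.1 q.2 : ℚ) := by
      intro q hq
      have hadj : Hᶜ.Adj q.1 q.2 := (mem_filter.1 hq).2
      have := (cn_lb H q.1 q.2 hadj).2 (hcom q.1 q.2 hadj)
      have := (Nat.cast_le (α := ℚ)).2 this
      push_cast at this ⊢
      linarith
    have hdegsum : ∀ q ∈ cP H, (Hᶜ.degree q.1 : ℚ) + (Hᶜ.degree q.2 : ℚ) ≤ (t : ℚ) + 1 := by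
      intro q hq
      have hadj : Hᶜ.Adj q.1 q.2 := (mem_filter.1 hq).2
      have := fdeg_add_le H q.1 q.2 hadj
      have := (Nat.cast_le (α := ℚ)).2 this
      push_cast at this ⊢
      linarith
    have h1 : ∑ q ∈ cP H, (((N : ℚ) + 1) - (Hᶜ.degree q.1 : ℚ) - (Hᶜ.degree q.2 : ℚ))
        ≤ ∑ q ∈ cP H, (cn H q.1 q.2 : ℚ) := Finset.sum_le_sum hterm
    have hrw2 : ∀ q ∈ cP H, (((N : ℚ) + 1) - (Hᶜ.degree q.1 : ℚ) - (Hᶜ.degree q.2 : ℚ))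
        = (((N : ℚ) + 1) - ((Hᶜ.degree q.1 : ℚ) + (Hᶜ.degree q.2 : ℚ))) := fun q _ => by ring
    have h2 : ∑ q ∈ cP H, (((N : ℚ) + 1) - (Hᶜ.degree q.1 : ℚ) - (Hᶜ.degree q.2 : ℚ))
        = 2 * (t : ℚ) * ((N : ℚ) + 1)
          - ∑ q ∈ cP H, ((Hᶜ.degree q.1 : ℚ) + (Hᶜ.degree q.2 : ℚ)) := by
      rw [Finset.sum_congr rfl hrw2, Finset.sum_sub_distrib, Finset.sum_const, hcards]
      push_cast
      ring
    have h3 : ∑ q ∈ cP H, ((Hᶜ.degree q.1 : ℚ) + (Hᶜ.degree q.2 : ℚ))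
        ≤ 2 * (t : ℚ) * ((t : ℚ) + 1) := by
      calc ∑ q ∈ cP H, ((Hᶜ.degree q.1 : ℚ) + (Hᶜ.degree q.2 : ℚ))
          ≤ ∑ _q ∈ cP H, ((t : ℚ) + 1) := Finset.sum_le_sum hdegsum
        _ = 2 * (t : ℚ) * ((t : ℚ) + 1) := by
            rw [Finset.sum_const, hcards]; push_cast; ring
    have ht1' : (1 : ℚ) ≤ (t : ℚ) := by exact_mod_cast ht1
    rw [hsum]
    nlinarith [h1, h2, h3]
  · -- case A : some adjacent pair with small degree sum
    push_neg at hcaseB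
    obtain ⟨q0, hq0mem, hq0⟩ := hcaseB
    have hq0' : Hᶜ.degree q0.1 + Hᶜ.degree q0.2 ≤ t := by omega
    have hq0adj : Hᶜ.Adj q0.1 q0.2 := (mem_filter.1 hq0mem).2
    have hswmem : q0.swap ∈ cP H := by
      simp only [cP, mem_filter, mem_product, mem_univ, true_and] at hq0mem ⊢
      exact Hᶜ.adj_symm hq0mem
    have hq0ne : q0 ≠ q0.swap := by
      intro h
      have := congrArg Prod.fst h
      exact Hᶜ.ne_of_adj hq0adj (by simpa [Prod.swap] using this)
    have hterm : ∀ q ∈ cP H, ((N : ℚ)) - (Hᶜ.degree q.1 : ℚ) - (Hᶜ.degree q.2 : ℚ)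
        ≤ (cn H q.1 q.2 : ℚ) := by
      intro q hq
      have hadj : Hᶜ.Adj q.1 q.2 := (mem_filter.1 hq).2
      have := (cn_lb H q.1 q.2 hadj).1
      have := (Nat.cast_le (α := ℚ)).2 this
      push_cast at this ⊢
      linarith
    have h1 : ∑ q ∈ cP H, (((N : ℚ)) - (Hᶜ.degree q.1 : ℚ) - (Hᶜ.degree q.2 : ℚ))
        ≤ ∑ q ∈ cP H, (cn H q.1 q.2 : ℚ) := Finset.sum_le_sum hterm
    have hrw2 : ∀ q ∈ cP H, (((N : ℚ)) - (Hᶜ.degree q.1 : ℚ) - (Hᶜ.degree q.2 : ℚ))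
        = (((N : ℚ)) - ((Hᶜ.degree q.1 : ℚ) + (Hᶜ.degree q.2 : ℚ))) := fun q _ => by ring
    have h2 : ∑ q ∈ cP H, (((N : ℚ)) - (Hᶜ.degree q.1 : ℚ) - (Hᶜ.degree q.2 : ℚ))
        = 2 * (t : ℚ) * ((N : ℚ))
          - ∑ q ∈ cP H, ((Hᶜ.degree q.1 : ℚ) + (Hᶜ.degree q.2 : ℚ)) := by
      rw [Finset.sum_congr rfl hrw2, Finset.sum_sub_distrib, Finset.sum_const, hcards]
      push_cast
      ring
    -- key improved bound on the degree sums
    have h3 : ∑ q ∈ cP H, ((Hᶜ.degree q.1 : ℚ) + (Hᶜ.degree q.2 : ℚ))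
        ≤ 2 * (t : ℚ) * ((t : ℚ) + 1) - 2 := by
      have hle : ∀ q ∈ cP H, ((Hᶜ.degree q.1 : ℚ) + (Hᶜ.degree q.2 : ℚ))
          ≤ (if q = q0 ∨ q = q0.swap then (t : ℚ) else (t : ℚ) + 1) := by
        intro q hq
        by_cases hcond : q = q0 ∨ q = q0.swap
        · rw [if_pos hcond]
          rcases hcond with rfl | rfl
          · exact_mod_cast (by push_cast; exact_mod_cast hq0' : ((Hᶜ.degree q.1 + Hᶜ.degree q.2 : ℕ) : ℚ) ≤ (t:ℚ))
          · have : Hᶜ.degree q0.swap.1 + Hᶜ.degree q0.swap.2 ≤ t := by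
              simpa [Prod.swap, Nat.add_comm] using hq0'
            exact_mod_cast (by push_cast; exact_mod_cast this : ((Hᶜ.degree q0.swap.1 + Hᶜ.degree q0.swap.2 : ℕ) : ℚ) ≤ (t:ℚ))
        · rw [if_neg hcond]
          have hadj : Hᶜ.Adj q.1 q.2 := (mem_filter.1 hq).2
          have := fdeg_add_le H q.1 q.2 hadj
          have := (Nat.cast_le (α := ℚ)).2 this
          push_cast at this ⊢
          linarith
      have hsum2 := Finset.sum_le_sum hle
      have hsplit : ∑ q ∈ cP H, (if q = q0 ∨ q = q0.swap then (t : ℚ) else (t : ℚ) + 1)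
          = 2 * (t : ℚ) * ((t : ℚ) + 1) - 2 := by
        rw [Finset.sum_ite]
        have hfe : (cP H).filter (fun q => q = q0 ∨ q = q0.swap) = {q0, q0.swap} := by
          ext q
          simp only [mem_filter, mem_insert, mem_singleton]
          constructor
          · exact fun h => h.2
          · rintro (rfl | rfl)
            · exact ⟨hq0mem, Or.inl rfl⟩
            · exact ⟨hswmem, Or.inr rfl⟩
        have hc1 : ((cP H).filter (fun q => q = q0 ∨ q = q0.swap)).card = 2 := by
          rw [hfe, card_insert_of_notMem (by simpa using hq0ne), card_singleton]
        have hc2 : ((cP H).filter (fun q => ¬(q = q0 ∨ q = q0.swap))).card = 2 * t - 2 := by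
          have := Finset.card_filter_add_card_filter_not
            (s := cP H) (p := fun q => q = q0 ∨ q = q0.swap)
          rw [hcards] at this
          omega
        rw [Finset.sum_const, Finset.sum_const, hc1, hc2]
        have h2t : (2 : ℕ) ≤ 2 * t := by omega
        have : ((2 * t - 2 : ℕ) : ℚ) = 2 * (t : ℚ) - 2 := by
          push_cast [Nat.cast_sub h2t]
          ring
        rw [nsmul_eq_mul, nsmul_eq_mul, this]
        push_cast
        ring
      linarith
    have ht1' : (1 : ℚ) ≤ (t : ℚ) := by exact_mod_cast ht1
    rw [hsum]
    nlinarith [h1, h2, h3]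

lemma star_eq (q : V) (hstar : ∀ e ∈ Hᶜ.edgeFinset, q ∈ e) :
    H = acGraphI q (univ \ insert q (Hᶜ.neighborFinset q)) := by
  classical
  set B : Finset V := univ \ insert q (Hᶜ.neighborFinset q) with hB
  have hmemB : ∀ v, v ∈ B ↔ (v ≠ q ∧ ¬ Hᶜ.Adj q v) := by
    intro v
    simp [hB, mem_neighborFinset, not_or]
  ext u v
  have hcompl : H.Adj u v ↔ u ≠ v ∧ ¬ Hᶜ.Adj u v := by
    constructor
    · intro h
      exact ⟨H.ne_of_adj h, fun hc => ((H.compl_adj _ _).1 hc).2 h⟩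
    · rintro ⟨hne, hn⟩
      by_contra hn2
      exact hn ((H.compl_adj _ _).2 ⟨hne, hn2⟩)
  rw [hcompl]
  show _ ↔ (u ≠ v ∧ ((u ≠ q ∧ v ≠ q) ∨ (u = q ∧ v ∈ B) ∨ (v = q ∧ u ∈ B)))
  constructor
  · rintro ⟨hne, hn⟩
    refine ⟨hne, ?_⟩
    by_cases huq : u = q
    · refine Or.inr (Or.inl ⟨huq, (hmemB v).2 ⟨fun h => hne (huq.trans h.symm), fun h => hn (huq ▸ h)⟩⟩)
    · by_cases hvq : v = q
      · refine Or.inr (Or.inr ⟨hvq, (hmemB u).2 ⟨huq, fun h => hn (hvq ▸ (Hᶜ.adj_symm h))⟩⟩)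
      · exact Or.inl ⟨huq, hvq⟩
  · rintro ⟨hne, hcase⟩
    refine ⟨hne, fun hadj => ?_⟩
    have hedge : s(u, v) ∈ Hᶜ.edgeFinset := by rwa [mem_edgeFinset, mem_edgeSet]
    have hq := hstar _ hedge
    rw [Sym2.mem_iff] at hq
    rcases hcase with ⟨huq, hvq⟩ | ⟨huq, hvB⟩ | ⟨hvq, huB⟩
    · rcases hq with h | h
      · exact huq h.symm
      · exact hvq h.symm
    · exact ((hmemB v).1 hvB).2 (huq ▸ hadj)
    · exact ((hmemB u).1 huB).2 (hvq ▸ (Hᶜ.adj_symm hadj))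

lemma star_degree (q : V) (hstar : ∀ e ∈ Hᶜ.edgeFinset, q ∈ e) :
    Hᶜ.degree q = Hᶜ.edgeFinset.card := by
  classical
  rw [← card_incidenceFinset_eq_degree]
  congr 1
  apply Finset.Subset.antisymm
  · intro e he
    rw [mem_incidenceFinset] at he
    rw [mem_edgeFinset]
    exact he.1
  · intro e he
    rw [mem_incidenceFinset]
    exact ⟨(mem_edgeFinset).1 he, hstar e he⟩

lemma ac_iso (p q : V) (A B : Finset V) (hpA : p ∉ A) (hqB : q ∉ B)
    (hcard : B.card = A.card) : Nonempty (acGraphI q B ≃g acGraphI p A) := by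
  classical
  have hc2 : (univ \ insert q B).card = (univ \ insert p A).card := by
    rw [card_sdiff_of_subset (subset_univ _), card_sdiff_of_subset (subset_univ _),
      card_insert_of_notMem hqB, card_insert_of_notMem hpA, hcard]
  let e1 : {x // x ∈ B} ≃ {x // x ∈ A} := Finset.equivOfCardEq hcard
  let e2 : {x // x ∈ univ \ insert q B} ≃ {x // x ∈ univ \ insert p A} :=
    Finset.equivOfCardEq hc2
  have hmem2 : ∀ v : V, v ≠ q → v ∉ B → v ∈ univ \ insert q B := by
    intro v h1 h2; simp [h1, h2]
  have hmem2' : ∀ v : V, v ≠ p → v ∉ A → v ∈ univ \ insert p A := by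
    intro v h1 h2; simp [h1, h2]
  let f : V → V := fun v =>
    if h : v = q then p
    else if h2 : v ∈ B then (e1 ⟨v, h2⟩ : V)
    else (e2 ⟨v, hmem2 v h h2⟩ : V)
  let g : V → V := fun w =>
    if h : w = p then q
    else if h2 : w ∈ A then (e1.symm ⟨w, h2⟩ : V)
    else (e2.symm ⟨w, hmem2' w h h2⟩ : V)
  have he1A : ∀ (x : {x // x ∈ B}), (e1 x : V) ∈ A := fun x => (e1 x).2
  have he2M : ∀ (x : {x // x ∈ univ \ insert q B}), (e2 x : V) ∉ A ∧ (e2 x : V) ≠ p := by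
    intro x
    have := (e2 x).2
    rw [mem_sdiff, mem_insert, not_or] at this
    exact ⟨this.2.2, this.2.1⟩
  have he1B : ∀ (x : {x // x ∈ A}), (e1.symm x : V) ∈ B := fun x => (e1.symm x).2
  have he2M' : ∀ (x : {x // x ∈ univ \ insert p A}), (e2.symm x : V) ∉ B ∧ (e2.symm x : V) ≠ q := by
    intro x
    have := (e2.symm x).2
    rw [mem_sdiff, mem_insert, not_or] at this
    exact ⟨this.2.2, this.2.1⟩
  -- basic facts about f
  have hfq : f q = p := dif_pos rfl
  have hfB : ∀ v, v ∈ B → f v ∈ A := by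
    intro v hv
    have hvq : ¬ (v = q) := fun h => hqB (h ▸ hv)
    show (if h : v = q then p else if h2 : v ∈ B then (e1 ⟨v, h2⟩ : V)
      else (e2 ⟨v, hmem2 v h h2⟩ : V)) ∈ A
    rw [dif_neg hvq, dif_pos hv]
    exact he1A _
  have hfO : ∀ v, v ≠ q → v ∉ B → f v ∉ A ∧ f v ≠ p := by
    intro v h1 h2
    have hfv : f v = (e2 ⟨v, hmem2 v h1 h2⟩ : V) := by
      show (if h : v = q then p else if hh : v ∈ B then (e1 ⟨v, hh⟩ : V)
        else (e2 ⟨v, hmem2 v h hh⟩ : V)) = _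
      rw [dif_neg h1, dif_neg h2]
    rw [hfv]
    exact he2M _
  have hgf : Function.LeftInverse g f := by
    intro v
    by_cases h1 : v = q
    · subst h1
      rw [hfq]
      exact dif_pos rfl
    · by_cases h2 : v ∈ B
      · have hfv : f v = (e1 ⟨v, h2⟩ : V) := by
          show (if h : v = q then p else if hh : v ∈ B then (e1 ⟨v, hh⟩ : V) else _) = _
          rw [dif_neg h1, dif_pos h2]
        have hA : f v ∈ A := by rw [hfv]; exact he1A _
        have hnp : ¬ (f v = p) := fun h => hpA (h ▸ hA)
        show (if h : f v = p then q else if h2 : f v ∈ A then (e1.symm ⟨f v, h2⟩ : V) else _) = v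
        rw [dif_neg hnp, dif_pos hA]
        have : (⟨f v, hA⟩ : {x // x ∈ A}) = e1 ⟨v, h2⟩ := Subtype.ext hfv
        rw [this, Equiv.symm_apply_apply]
      · have hfv : f v = (e2 ⟨v, hmem2 v h1 h2⟩ : V) := by
          show (if h : v = q then p else if hh : v ∈ B then (e1 ⟨v, hh⟩ : V)
            else (e2 ⟨v, hmem2 v h hh⟩ : V)) = _
          rw [dif_neg h1, dif_neg h2]
        have hM := he2M ⟨v, hmem2 v h1 h2⟩
        rw [← hfv] at hM
        show (if h : f v = p then q else if h2 : f v ∈ A then (e1.symm ⟨f v, h2⟩ : V)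
          else (e2.symm ⟨f v, hmem2' _ h h2⟩ : V)) = v
        rw [dif_neg hM.2, dif_neg hM.1]
        have : (⟨f v, hmem2' _ hM.2 hM.1⟩ : {x // x ∈ univ \ insert p A})
            = e2 ⟨v, hmem2 v h1 h2⟩ := Subtype.ext hfv
        rw [this, Equiv.symm_apply_apply]
  have hinj : Function.Injective f := hgf.injective
  have hbij : Function.Bijective f := Finite.injective_iff_bijective.1 hinj
  have hfp : ∀ v, f v = p ↔ v = q := by
    intro v
    constructor
    · intro h
      by_contra h1
      by_cases h2 : v ∈ B
      · exact hpA (h ▸ hfB v h2)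
      · exact (hfO v h1 h2).2 h
    · intro h; rw [h]; exact hfq
  have hfA : ∀ v, f v ∈ A ↔ v ∈ B := by
    intro v
    constructor
    · intro h
      by_contra h2
      by_cases h1 : v = q
      · rw [h1, hfq] at h; exact hpA h
      · exact (hfO v h1 h2).1 h
    · exact hfB v
  refine ⟨⟨Equiv.ofBijective f hbij, ?_⟩⟩
  intro u v
  show (acGraphI p A).Adj (f u) (f v) ↔ (acGraphI q B).Adj u v
  have h1 := hfp u
  have h2 := hfp v
  have h3 := hfA u
  have h4 := hfA v
  have h5 : f u = f v ↔ u = v := hinj.eq_iff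
  show (f u ≠ f v ∧ ((f u ≠ p ∧ f v ≠ p) ∨ (f u = p ∧ f v ∈ A) ∨ (f v = p ∧ f u ∈ A))) ↔
    (u ≠ v ∧ ((u ≠ q ∧ v ≠ q) ∨ (u = q ∧ v ∈ B) ∨ (v = q ∧ u ∈ B)))
  constructor
  · rintro ⟨hne, hc⟩
    refine ⟨fun h => hne (h ▸ rfl), ?_⟩
    rcases hc with ⟨ha, hb⟩ | ⟨ha, hb⟩ | ⟨ha, hb⟩
    · exact Or.inl ⟨fun h => ha (h1.2 h), fun h => hb (h2.2 h)⟩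
    · exact Or.inr (Or.inl ⟨h1.1 ha, h4.1 hb⟩)
    · exact Or.inr (Or.inr ⟨h2.1 ha, h3.1 hb⟩)
  · rintro ⟨hne, hc⟩
    refine ⟨fun h => hne (h5.1 h), ?_⟩
    rcases hc with ⟨ha, hb⟩ | ⟨ha, hb⟩ | ⟨ha, hb⟩
    · exact Or.inl ⟨fun h => ha (h1.1 h), fun h => hb (h2.1 h)⟩
    · exact Or.inr (Or.inl ⟨h1.2 ha, h4.2 hb⟩)
    · exact Or.inr (Or.inr ⟨h2.2 ha, h3.2 hb⟩)

end CNT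
end
end ACProof

/-- For `(N-1 choose 2)+1 ≤ m ≤ (N choose 2)-1`, the type I almost complete graph of
order `N` and size `m` has strictly larger total clustering than any nonisomorphic graph
of the same order and size. -/
theorem stmt12 {V : Type*} [Fintype V] [DecidableEq V] (p : V) (A : Finset V)
    (hp : p ∉ A) (h4 : 4 ≤ Fintype.card V) (m : ℕ)
    (hm1 : (Fintype.card V - 1).choose 2 + 1 ≤ m)
    (hm2 : m ≤ (Fintype.card V).choose 2 - 1)
    (hA : A.card = m - (Fintype.card V - 1).choose 2)
    (H : SimpleGraph V) (hH : edgeCount H = m)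
    (hiso : IsEmpty (H ≃g acGraphI p A)) :
    totalClust H < totalClust (acGraphI p A) := by
  classical
  letI : DecidableRel H.Adj := Classical.decRel _
  open ACProof in
  have hn : Fintype.card V - 1 + 1 = Fintype.card V := by omega
  have hchoose : (Fintype.card V).choose 2
      = (Fintype.card V - 1).choose 2 + (Fintype.card V - 1) := by
    conv_lhs => rw [← hn]
    rw [Nat.choose_succ_succ, Nat.choose_one_right, Nat.add_comm]
  set t := Hᶜ.edgeFinset.card with hT
  have hHdeg : ∀ v : V, H.degree v ≤ Fintype.card V - 1 := fun v => by
    have := H.degree_lt_card_verts v; omega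
  have hdegc : ∀ v : V, Hᶜ.degree v + H.degree v = Fintype.card V - 1 := by
    intro v
    have h1 : Hᶜ.neighborFinset v = (H.neighborFinset v)ᶜ \ {v} := neighborFinset_compl H v
    have h2 : Hᶜ.degree v = (H.neighborFinset v)ᶜ.card - 1 := by
      rw [← card_neighborFinset_eq_degree, h1, card_sdiff_of_subset (by simp [mem_compl])]
      simp
    have h3 : (H.neighborFinset v)ᶜ.card = Fintype.card V - H.degree v := by
      rw [Finset.card_compl, card_neighborFinset_eq_degree]
    have hdv := hHdeg v
    omega
  have h2t2m : 2 * t + 2 * m = 2 * (Fintype.card V).choose 2 := by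
    have h1 : ∑ v : V, Hᶜ.degree v = 2 * t := Hᶜ.sum_degrees_eq_twice_card_edges
    have h2 : ∑ v : V, H.degree v = 2 * m := by
      rw [H.sum_degrees_eq_twice_card_edges, ← ACProof.edgeCount_eq_card, hH]
    have h3 : ∑ v : V, (Hᶜ.degree v + H.degree v) = (Fintype.card V) * (Fintype.card V - 1) := by
      rw [Finset.sum_congr rfl (fun v _ => hdegc v), Finset.sum_const, card_univ, smul_eq_mul]
    have h6 : ∑ v : V, ((⊤ : SimpleGraph V).degree v) = 2 * (Fintype.card V).choose 2 := by
      rw [(⊤ : SimpleGraph V).sum_degrees_eq_twice_card_edges,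
        card_edgeFinset_top_eq_card_choose_two]
    have h7 : ∑ v : V, ((⊤ : SimpleGraph V).degree v)
        = (Fintype.card V) * (Fintype.card V - 1) := by
      rw [Finset.sum_congr rfl (fun v _ => complete_graph_degree v), Finset.sum_const,
        card_univ, smul_eq_mul]
    rw [Finset.sum_add_distrib, h1, h2] at h3
    omega
  have hCge : m + 1 ≤ (Fintype.card V).choose 2 := by omega
  have ht1 : 1 ≤ t := by omega
  have hAcard : A.card + t = Fintype.card V - 1 := by
    rw [hA]; omega
  have hBc : (univ \ insert p A).card = t := by
    rw [card_sdiff_of_subset (subset_univ _), card_insert_of_notMem hp, card_univ]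
    omega
  have hnstar : ¬ ∃ q, ∀ e ∈ Hᶜ.edgeFinset, q ∈ e := by
    rintro ⟨q, hstar⟩
    have hqB' : q ∉ univ \ insert q (Hᶜ.neighborFinset q) := by simp
    have hEq := ACProof.star_eq H q hstar
    have hB'card : (univ \ insert q (Hᶜ.neighborFinset q)).card = A.card := by
      rw [card_sdiff_of_subset (subset_univ _),
        card_insert_of_notMem (by simp [mem_neighborFinset] : q ∉ Hᶜ.neighborFinset q),
        card_univ, card_neighborFinset_eq_degree, ACProof.star_degree H q hstar]
      omega
    obtain ⟨iso⟩ := ACProof.ac_iso p q A _ hp hqB' hB'card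
    exact hiso.false (hEq.symm ▸ iso)
  have hmc := ACProof.main_count H hnstar ht1
  have hle := ACProof.totalClust_le H
  have hac := ACProof.ac_totalClust hp (show 2 ≤ Fintype.card V by omega)
  rw [hac, hBc]
  have hNq : (4 : ℚ) ≤ (Fintype.card V : ℚ) := by exact_mod_cast h4
  have hD0 : (0:ℚ) < ((Fintype.card V : ℚ) - 1) * ((Fintype.card V : ℚ) - 2) := by nlinarith
  have hAq : (A.card : ℚ) = (Fintype.card V : ℚ) - 1 - (t : ℚ) := by
    have h' := congrArg (Nat.cast : ℕ → ℚ) hAcard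
    push_cast [Nat.cast_sub (by omega : 1 ≤ Fintype.card V)] at h'
    linarith
  set D0 : ℚ := ((Fintype.card V : ℚ) - 1) * ((Fintype.card V : ℚ) - 2) with hD0def
  set X : ℚ := 2 * (t : ℚ) * ((Fintype.card V : ℚ) - 1 - (t : ℚ)) with hX
  have hXA : (A.card : ℚ) * (2 * (t : ℚ)) = X := by rw [hAq, hX]; ring
  have hmc' : X + 2 ≤ ∑ u, (ACProof.E2 H u : ℚ) := hmc
  have k1 : (X + 2) / D0 ≤ (∑ u, (ACProof.E2 H u : ℚ)) / D0 := by
    rw [div_le_div_iff₀ hD0 hD0]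
    have := mul_le_mul_of_nonneg_right hmc' hD0.le
    linarith
  have k2 : X / D0 < (X + 2) / D0 := by
    rw [div_lt_div_iff₀ hD0 hD0]
    have := mul_lt_mul_of_pos_right (show X < X + 2 by linarith) hD0
    linarith
  have hgoal : (A.card : ℚ) * (2 * (t : ℚ)) / D0 = X / D0 := by rw [hXA]
  rw [hgoal]
  linarith [hle, k1, k2]
end
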